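/- Let G be a group, g ∈ G an element of infinite order (¬ IsOfFinOrder g) such that the cyclic subgroup N = Subgroup.zpowers g is normal in G. Let n ≥ 1 and let w ∈ FreeGroup (Fin n) be an E-type iterated identity of G such that the quotient group G/N has iterational depth at most D with respect to w. Then G has iterational depth at most 2D+1 with respect to w. -/

import Mathlib

noncomputable section

/-- The verbal map: evaluate `w` with the variable of index `0` set to `x`
and the variable of index `i` set to `f i` for `i ≠ 0`. -/
def verbalMap {n : ℕ} [NeZero n] {G : Type*} [Group G] (w : FreeGroup (Fin n))
    (f : Fin n → G) : G → G :=
  fun x => FreeGroup.lift (Function.update f 0 x) w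

/-- `w` is an E-type (Engel type) iterated identity of `G`. -/
def IsEIteratedIdentity {n : ℕ} [NeZero n] (w : FreeGroup (Fin n)) (G : Type*) [Group G] : Prop :=
  ∀ f : Fin n → G, ∃ d : ℕ, 1 ≤ d ∧ (verbalMap w f)^[d] (f 0) = 1

/-- `G` has iterational depth at most `D` with respect to `w`. -/
def DepthAtMost {n : ℕ} [NeZero n] (w : FreeGroup (Fin n)) (G : Type*) [Group G] (D : ℕ) : Prop :=
  ∀ f : Fin n → G, ∃ d : ℕ, 1 ≤ d ∧ d ≤ D ∧ (verbalMap w f)^[d] (f 0) = 1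

/-! ### Auxiliary lemmas -/

section AuxHelpers

open Subgroup

variable {n : ℕ} [NeZero n] {G : Type*} [Group G] {H : Type*} [Group H]

lemma verbalMap_hom (σ : G →* H) (w : FreeGroup (Fin n)) (f : Fin n → G) (x : G) :
    σ (verbalMap w f x) = verbalMap w (σ ∘ f) (σ x) := by
  show σ.comp (FreeGroup.lift (Function.update f 0 x)) w = _
  unfold verbalMap
  rw [← Function.comp_update σ f 0 x]
  exact FreeGroup.lift_unique (σ.comp (FreeGroup.lift (Function.update f 0 x)))
    (fun i => by simp)

lemma verbalMap_update (w : FreeGroup (Fin n)) (f : Fin n → G) (y : G) :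
    verbalMap w (Function.update f 0 y) = verbalMap w f := by
  funext x
  unfold verbalMap
  rw [Function.update_idem]

lemma verbalMap_hom_iterate (σ : G →* H) (w : FreeGroup (Fin n)) (f : Fin n → G) (k : ℕ)
    (x : G) : σ ((verbalMap w f)^[k] x) = (verbalMap w (σ ∘ f))^[k] (σ x) := by
  induction k with
  | zero => simp
  | succ k ih =>
      rw [Function.iterate_succ_apply', Function.iterate_succ_apply', verbalMap_hom, ih]

variable (g : G) [hN : (Subgroup.zpowers g).Normal]

omit hN in
lemma commN {x y : G} (hx : x ∈ zpowers g) (hy : y ∈ zpowers g) : x * y = y * x := by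
  obtain ⟨i, rfl⟩ := mem_zpowers_iff.mp hx
  obtain ⟨j, rfl⟩ := mem_zpowers_iff.mp hy
  rw [← zpow_add, ← zpow_add, add_comm]

lemma diff_mem (w : FreeGroup (Fin n)) (f : Fin n → G) (b : G) {z : G}
    (hz : z ∈ zpowers g) :
    (verbalMap w f b)⁻¹ * verbalMap w f (z * b) ∈ zpowers g := by
  set π := QuotientGroup.mk' (zpowers g) with hπ
  have h1 : π (verbalMap w f (z * b)) = π (verbalMap w f b) := by
    rw [verbalMap_hom π, verbalMap_hom π, map_mul]
    have : π z = 1 := (QuotientGroup.eq_one_iff z).mpr hz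
    rw [this, one_mul]
  have : π ((verbalMap w f b)⁻¹ * verbalMap w f (z * b)) = 1 := by
    rw [map_mul, map_inv, h1, inv_mul_cancel]
  exact (QuotientGroup.eq_one_iff _).mp this

lemma lemS (w : FreeGroup (Fin n)) (f : Fin n → G) (b : G) {z₁ z₂ : G}
    (hz₁ : z₁ ∈ zpowers g) (hz₂ : z₂ ∈ zpowers g) :
    verbalMap w f (z₁ * z₂ * b)
      = verbalMap w f (z₁ * b) * (verbalMap w f b)⁻¹ * verbalMap w f (z₂ * b) := by
  induction w using FreeGroup.induction_on with
  | C1 => simp [verbalMap]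
  | of i =>
      have hp : ∀ x : G, verbalMap (FreeGroup.of i) f x = Function.update f 0 x i := fun x =>
        FreeGroup.lift_apply_of
      rw [hp, hp, hp, hp]
      by_cases hi : i = 0
      · subst hi
        simp only [Function.update_self]
        group
      · simp only [Function.update_of_ne hi]
        group
  | inv_of i _ =>
      have hp : ∀ x : G, verbalMap ((FreeGroup.of i)⁻¹) f x = (Function.update f 0 x i)⁻¹ := fun x => by
        show FreeGroup.lift _ (FreeGroup.of i)⁻¹ = _
        rw [map_inv, FreeGroup.lift_apply_of]
      rw [hp, hp, hp, hp]
      by_cases hi : i = 0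
      · subst hi
        simp only [Function.update_self]
        rw [commN g hz₁ hz₂]
        group
      · simp only [Function.update_of_ne hi]
        group
  | mul w₁ w₂ ih₁ ih₂ =>
      simp only [verbalMap, map_mul] at *
      rw [ih₁, ih₂]
      set a1 := FreeGroup.lift (Function.update f 0 (z₁ * b)) w₁
      set a2 := FreeGroup.lift (Function.update f 0 b) w₁
      set a3 := FreeGroup.lift (Function.update f 0 (z₂ * b)) w₁
      set b1 := FreeGroup.lift (Function.update f 0 (z₁ * b)) w₂
      set b2 := FreeGroup.lift (Function.update f 0 b) w₂
      set b3 := FreeGroup.lift (Function.update f 0 (z₂ * b)) w₂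
      have hu : a2⁻¹ * a3 ∈ zpowers g := diff_mem g w₁ f b hz₂
      have hv : b1 * b2⁻¹ ∈ zpowers g := by
        have h0 : b2⁻¹ * b1 ∈ zpowers g := diff_mem g w₂ f b hz₁
        have : b1 * (b2⁻¹ * b1) * b1⁻¹ ∈ zpowers g := hN.conj_mem _ h0 b1
        simpa [mul_assoc] using this
      have hc : (a2⁻¹ * a3) * (b1 * b2⁻¹) = (b1 * b2⁻¹) * (a2⁻¹ * a3) := commN g hu hv
      have e1 : a1 * a2⁻¹ * a3 * (b1 * b2⁻¹ * b3)
          = a1 * ((a2⁻¹ * a3) * (b1 * b2⁻¹)) * b3 := by group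
      have e2 : a1 * b1 * (a2 * b2)⁻¹ * (a3 * b3)
          = a1 * ((b1 * b2⁻¹) * (a2⁻¹ * a3)) * b3 := by group
      rw [e1, e2, hc]

lemma keyLemma (w : FreeGroup (Fin n)) (f : Fin n → G) (b : G) :
    ∃ t : ℤ, ∀ a : ℤ, verbalMap w f (b * g ^ a) = verbalMap w f b * g ^ (t * a) := by
  set φ := verbalMap w f with hφ
  set d : ℤ → G := fun a => (φ b)⁻¹ * φ (g ^ a * b) with hd
  have hd_add : ∀ a₁ a₂ : ℤ, d (a₁ + a₂) = d a₁ * d a₂ := by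
    intro a₁ a₂
    have hS := lemS g w f b (z₁ := g ^ a₁) (z₂ := g ^ a₂) ⟨a₁, rfl⟩ ⟨a₂, rfl⟩
    rw [← zpow_add] at hS
    simp only [hd, hφ] at *
    rw [hS]
    group
  have hd0 : d 0 = 1 := by
    have h := hd_add 0 0
    rw [add_zero] at h
    have h2 : d 0 * d 0 = d 0 * 1 := by rw [mul_one, ← h]
    exact mul_left_cancel h2
  obtain ⟨t₀, ht₀⟩ := Subgroup.mem_zpowers_iff.mp
    (diff_mem g w f b (z := g ^ (1:ℤ)) ⟨1, rfl⟩)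
  have hd1 : d 1 = g ^ t₀ := by rw [hd]; exact ht₀.symm
  have hda : ∀ a : ℤ, d a = g ^ (t₀ * a) := by
    intro a
    induction a using Int.induction_on with
    | zero => rw [hd0, mul_zero, zpow_zero]
    | succ k ih =>
        have := hd_add k 1
        rw [this, ih, hd1, ← zpow_add]
        congr 1
        ring
    | pred k ih =>
        have h2 := hd_add (-k - 1) 1
        have h3 : (-k - 1 : ℤ) + 1 = -k := by ring
        rw [h3, ih, hd1] at h2
        have : d (-k - 1) = g ^ (t₀ * (-k)) * (g ^ t₀)⁻¹ := by
          rw [h2]; group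
        rw [this, ← zpow_neg, ← zpow_add]
        congr 1
        ring
  obtain ⟨ε, hε⟩ := Subgroup.mem_zpowers_iff.mp (hN.conj_mem g (Subgroup.mem_zpowers g) b)
  have hconj : ∀ a : ℤ, b * g ^ a = g ^ (ε * a) * b := by
    intro a
    have h1 : (b * g * b⁻¹) ^ a = b * g ^ a * b⁻¹ := conj_zpow
    have h2 : (b * g * b⁻¹) ^ a = g ^ (ε * a) := by
      rw [← hε, ← zpow_mul]
    rw [h2] at h1
    rw [h1]
    group
  refine ⟨t₀ * ε, fun a => ?_⟩
  have h4 : φ (g ^ (ε * a) * b) = φ b * d (ε * a) := by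
    rw [hd]; group
  rw [hconj a, h4, hda]
  congr 1
  ring

lemma iter_form (w : FreeGroup (Fin n)) (f : Fin n → G) (k : ℕ) :
    ∃ s : ℤ, ∀ a : ℤ,
      (verbalMap w f)^[k] (g ^ a) = (verbalMap w f)^[k] 1 * g ^ (s * a) := by
  induction k with
  | zero => exact ⟨1, fun a => by simp⟩
  | succ k ih =>
      obtain ⟨s, hs⟩ := ih
      obtain ⟨t, ht⟩ := keyLemma g w f ((verbalMap w f)^[k] 1)
      refine ⟨t * s, fun a => ?_⟩
      rw [Function.iterate_succ_apply', hs a, ht (s * a), Function.iterate_succ_apply']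
      congr 1
      ring

end AuxHelpers

lemma affine_iter (c s : ℤ) : ∀ (j : ℕ) (a : ℤ),
    (fun x => c + s * x)^[j] a = s ^ j * a + c * ∑ i ∈ Finset.range j, s ^ i := by
  intro j
  induction j with
  | zero => intro a; simp
  | succ j ih =>
      intro a
      rw [Function.iterate_succ_apply', ih a, geom_sum_succ]
      ring

lemma intKey (c s a₀ : ℤ) (j₀ q : ℕ) (hj₀ : 1 ≤ j₀) (hq : 1 ≤ q)
    (h1 : c * ∑ i ∈ Finset.range j₀, s ^ i = 0)
    (h2 : s ^ q * a₀ + c * ∑ i ∈ Finset.range q, s ^ i = 0) :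
    a₀ = 0 ∨ c + s * a₀ = 0 := by
  rcases mul_eq_zero.mp h1 with hc0 | hT0
  · subst hc0
    rw [zero_mul, add_zero] at h2
    rcases mul_eq_zero.mp h2 with hs0 | ha0
    · right
      have : s = 0 := pow_eq_zero_iff (by omega) |>.mp hs0
      rw [this]; ring
    · left; exact ha0
  · have hpow : s ^ j₀ = 1 := by
      have := geom_sum_mul s j₀
      rw [hT0, zero_mul] at this
      omega
    have hu : IsUnit s := IsUnit.of_pow_eq_one hpow (by omega)
    rcases Int.isUnit_iff.mp hu with h1' | hm1
    · exfalso
      rw [h1'] at hT0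
      simp at hT0
      omega
    · subst hm1
      rw [neg_one_geom_sum] at h2
      rcases Nat.even_or_odd q with hq2 | hq2
      · rw [if_pos hq2, hq2.neg_one_pow] at h2
        left; linarith
      · rw [if_neg (Nat.not_even_iff_odd.mpr hq2), hq2.neg_one_pow] at h2
        right; linarith

/-- If `N = ⟨g⟩` is an infinite cyclic normal subgroup of `G` and `w` is an E-type iterated
identity of `G` whose iterational depth in `G/N` is at most `D`, then the iterational depth
of `w` in `G` is at most `2D + 1`. -/
theorem depth_of_infinite_cyclic_normal_subgroup (G : Type*) [Group G] (g : G)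
    (hg : ¬ IsOfFinOrder g) [hN : (Subgroup.zpowers g).Normal]
    (n : ℕ) [NeZero n] (w : FreeGroup (Fin n)) (D : ℕ)
    (hw : IsEIteratedIdentity w G)
    (hq : DepthAtMost w (G ⧸ Subgroup.zpowers g) D) :
    DepthAtMost w G (2 * D + 1) := by
  classical
  intro f
  set π := QuotientGroup.mk' (Subgroup.zpowers g) with hπdef
  set φ := verbalMap w f with hφ
  set φQ := verbalMap w (⇑π ∘ f) with hφQ
  have hcomm : ∀ (k : ℕ) (x : G), π (φ^[k] x) = φQ^[k] (π x) :=
    fun k x => verbalMap_hom_iterate π w f k x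
  have hinj : ∀ a : ℤ, g ^ a = 1 → a = 0 := by
    intro a ha
    have h0 : orderOf g = 0 := orderOf_eq_zero_iff.mpr hg
    have h2 : ((orderOf g : ℤ)) ∣ a := orderOf_dvd_iff_zpow_eq_one.mpr ha
    rw [h0] at h2
    simpa using h2
  -- Step 1: after `d₁ ≤ D` steps we land in the cyclic subgroup
  obtain ⟨d₁, hd₁1, hd₁D, hd₁⟩ := hq (⇑π ∘ f)
  set x₁ := φ^[d₁] (f 0) with hx₁def
  have hπx₁ : π x₁ = 1 := by
    rw [hx₁def, hcomm d₁ (f 0)]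
    exact hd₁
  have hx₁N : x₁ ∈ Subgroup.zpowers g := (QuotientGroup.eq_one_iff x₁).mp hπx₁
  obtain ⟨a₀, ha₀⟩ := Subgroup.mem_zpowers_iff.mp hx₁N
  by_cases hx₁ : x₁ = 1
  · exact ⟨d₁, hd₁1, by omega, hx₁⟩
  -- the identity of the quotient is periodic with some period `≤ D`
  have hper : ∃ d, (1 ≤ d ∧ φQ^[d] (1 : G ⧸ Subgroup.zpowers g) = 1) ∧ d ≤ D := by
    obtain ⟨d₂, h1, h2, h3⟩ := hq (⇑π ∘ Function.update f 0 x₁)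
    refine ⟨d₂, ⟨h1, ?_⟩, h2⟩
    have hcu : ⇑π ∘ Function.update f 0 x₁ = Function.update (⇑π ∘ f) 0 (π x₁) :=
      Function.comp_update (⇑π) f 0 x₁
    rw [hcu, hπx₁, verbalMap_update, Function.update_self] at h3
    exact h3
  have hPex : ∃ d, 1 ≤ d ∧ φQ^[d] (1 : G ⧸ Subgroup.zpowers g) = 1 :=
    ⟨hper.choose, hper.choose_spec.1⟩
  set p := Nat.find hPex with hpdef
  have hp1 : 1 ≤ p := (Nat.find_spec hPex).1
  have hpp : φQ^[p] (1 : G ⧸ Subgroup.zpowers g) = 1 := (Nat.find_spec hPex).2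
  have hpD : p ≤ D := by
    rw [hpdef]
    exact le_trans (Nat.find_le hper.choose_spec.1) hper.choose_spec.2
  have hmult : ∀ j : ℕ, φQ^[p * j] (1 : G ⧸ Subgroup.zpowers g) = 1 := by
    intro j
    induction j with
    | zero => simp
    | succ j ih =>
        have hsplit : p * (j + 1) = p + p * j := by ring
        rw [hsplit, Function.iterate_add_apply, ih, hpp]
  have hdvd : ∀ e : ℕ, 1 ≤ e → φQ^[e] (1 : G ⧸ Subgroup.zpowers g) = 1 → p ∣ e := by
    intro e he1 he
    have hdm : e = e % p + p * (e / p) := by rw [Nat.mod_add_div]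
    rw [hdm, Function.iterate_add_apply, hmult] at he
    by_cases hr : e % p = 0
    · exact Nat.dvd_of_mod_eq_zero hr
    · exfalso
      have hlt : e % p < Nat.find hPex := by
        rw [← hpdef]; exact Nat.mod_lt e (by omega)
      exact Nat.find_min hPex hlt ⟨by omega, he⟩
  -- E-type facts
  obtain ⟨e, he1, he⟩ := hw (Function.update f 0 x₁)
  rw [verbalMap_update, Function.update_self] at he
  obtain ⟨e', he'1, he'⟩ := hw (Function.update f 0 (1 : G))
  rw [verbalMap_update, Function.update_self] at he'
  have hpe : p ∣ e := by
    apply hdvd e he1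
    have h := hcomm e x₁
    rw [he, hπx₁] at h
    rw [← h]
    simp
  have hpe' : p ∣ e' := by
    apply hdvd e' he'1
    have h := hcomm e' 1
    rw [he'] at h
    rw [map_one] at h
    rw [← h]
  obtain ⟨q, hqe⟩ := hpe
  obtain ⟨j₀, hje⟩ := hpe'
  have hq1 : 1 ≤ q := by
    rcases Nat.eq_zero_or_pos q with h | h
    · subst h; rw [Nat.mul_zero] at hqe; omega
    · exact h
  have hj₀1 : 1 ≤ j₀ := by
    rcases Nat.eq_zero_or_pos j₀ with h | h
    · subst h; rw [Nat.mul_zero] at hje; omega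
    · exact h
  -- affine structure at level p
  obtain ⟨s, hs⟩ := iter_form g w f p
  have hvN : φ^[p] (1 : G) ∈ Subgroup.zpowers g := by
    apply (QuotientGroup.eq_one_iff _).mp
    have h := hcomm p 1
    rw [map_one] at h
    show π (φ^[p] 1) = 1
    rw [h, hpp]
  obtain ⟨c, hc⟩ := Subgroup.mem_zpowers_iff.mp hvN
  have hiter : ∀ (j : ℕ) (a : ℤ), φ^[p * j] (g ^ a) = g ^ ((fun x => c + s * x)^[j] a) := by
    intro j
    induction j with
    | zero => intro a; simp
    | succ j ih =>
        intro a
        have hsplit : p * (j + 1) = p + p * j := by ring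
        rw [hsplit, Function.iterate_add_apply, ih a, hs ((fun x => c + s * x)^[j] a),
          ← hc, ← zpow_add, Function.iterate_succ_apply']
  have hf1 : (fun x => c + s * x)^[j₀] 0 = 0 := by
    apply hinj
    have h := hiter j₀ 0
    rw [zpow_zero] at h
    rw [← h, ← hje, he']
  have hf2 : (fun x => c + s * x)^[q] a₀ = 0 := by
    apply hinj
    have h := hiter q a₀
    rw [ha₀] at h
    rw [← h, ← hqe, he]
  have hT : c * ∑ i ∈ Finset.range j₀, s ^ i = 0 := by
    have h := affine_iter c s j₀ 0
    rw [hf1, mul_zero, zero_add] at h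
    exact h.symm
  have hA : s ^ q * a₀ + c * ∑ i ∈ Finset.range q, s ^ i = 0 := by
    rw [← affine_iter c s q a₀]
    exact hf2
  rcases intKey c s a₀ j₀ q hj₀1 hq1 hT hA with h | h
  · exfalso
    apply hx₁
    rw [← ha₀, h, zpow_zero]
  · refine ⟨d₁ + p, by omega, by omega, ?_⟩
    have hsw : d₁ + p = p + d₁ := Nat.add_comm d₁ p
    rw [hsw, Function.iterate_add_apply, ← hx₁def, ← ha₀]
    have h1 := hiter 1 a₀
    rw [Nat.mul_one] at h1
    rw [h1]
    have h2 : (fun x => c + s * x)^[1] a₀ = 0 := by simpa using h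
    rw [h2, zpow_zero]
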